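/- Every positive polynomial f ∈ ℤ[x] (i.e., with positive leading coefficient) has a unique base-x representation f(x) = Σ_{i=0}^m b_i(x) x^i where each digit b_i(x) lies in {0, 1, …, a-1} ∪ {x-1, x-2, …, x-a} for some positive integer a, and b_m(x) ≠ 0. -/

import Mathlib

open Polynomial Finset

/-- A digit in base x: either a constant digit in {0, …, a-1} or a linear digit
x - j with 1 ≤ j ≤ a. -/
def IsDigit (a : ℕ) (q : Polynomial ℤ) : Prop :=
  (∃ j : ℕ, j < a ∧ q = Polynomial.C (j : ℤ)) ∨
  (∃ j : ℕ, 1 ≤ j ∧ j ≤ a ∧ q = Polynomial.X - Polynomial.C (j : ℤ))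

/-- `f = ∑_{i=0}^m d i * x^i` is a base-x representation of `f` with digits
bounded by `a` and nonzero top digit. -/
def IsBaseXRep (a : ℕ) (f : Polynomial ℤ) (m : ℕ) (d : ℕ → Polynomial ℤ) : Prop :=
  (∀ i, IsDigit a (d i)) ∧ d m ≠ 0 ∧ (∀ i, m < i → d i = 0) ∧
  f = ∑ i ∈ Finset.range (m + 1), d i * Polynomial.X ^ i

/-- The greedy digit of `f`. -/
noncomputable def dig (f : Polynomial ℤ) : Polynomial ℤ :=
  if 0 ≤ f.coeff 0 then C (f.coeff 0) else X + C (f.coeff 0)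

/-- The quotient after removing the greedy digit. -/
noncomputable def quot0 (f : Polynomial ℤ) : Polynomial ℤ :=
  if 0 ≤ f.coeff 0 then f.divX else f.divX - 1

/-- Iterated quotients. -/
noncomputable def Q (f : Polynomial ℤ) : ℕ → Polynomial ℤ
  | 0 => f
  | n+1 => quot0 (Q f n)

/-- The digit bound needed by the greedy digit of `f`. -/
noncomputable def need (f : Polynomial ℤ) : ℕ :=
  if 0 ≤ f.coeff 0 then (f.coeff 0).toNat + 1 else (-f.coeff 0).toNat

lemma quot0_zero : quot0 0 = 0 := by simp [quot0]

lemma dig_zero : dig 0 = 0 := by simp [dig]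

lemma need_pos (f : Polynomial ℤ) : 0 < need f := by
  unfold need; split_ifs with h <;> omega

lemma dig_add_X_mul_quot0 (f : Polynomial ℤ) : dig f + X * quot0 f = f := by
  unfold dig quot0
  split_ifs with h
  · rw [add_comm]; exact X_mul_divX_add f
  · linear_combination X_mul_divX_add f

lemma Q_succ_comm (f : Polynomial ℤ) (n : ℕ) : Q f (n + 1) = Q (quot0 f) n := by
  induction n with
  | zero => rfl
  | succ n ih => show quot0 (Q f (n+1)) = quot0 (Q (quot0 f) n); rw [ih]

lemma Q_zero_mono {f : Polynomial ℤ} {k : ℕ} (h : Q f k = 0) :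
    ∀ i, k ≤ i → Q f i = 0 := by
  intro i hi
  induction i with
  | zero => exact (Nat.le_zero.mp hi ▸ h)
  | succ n ih =>
    rcases Nat.lt_or_ge k (n+1) with h1 | h1
    · have := ih (by omega)
      show quot0 (Q f n) = 0
      rw [this, quot0_zero]
    · have : k = n + 1 := by omega
      exact this ▸ h

lemma natDegree_quot0_le (f : Polynomial ℤ) :
    (quot0 f).natDegree ≤ f.natDegree - 1 := by
  unfold quot0
  have h1 : f.divX.natDegree ≤ f.natDegree - 1 :=
    le_of_eq natDegree_divX_eq_natDegree_tsub_one
  split_ifs with h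
  · exact h1
  · calc (f.divX - 1).natDegree ≤ max f.divX.natDegree (1 : Polynomial ℤ).natDegree :=
          natDegree_sub_le _ _
      _ ≤ f.natDegree - 1 := by simpa using h1

lemma quot0_of_pos_const {f : Polynomial ℤ} (hd : f.natDegree = 0)
    (hf : 0 < f.leadingCoeff) : quot0 f = 0 := by
  have hfc : f = C (f.coeff 0) := eq_C_of_natDegree_eq_zero hd
  have hc : 0 < f.coeff 0 := by
    have h5 : f.leadingCoeff = f.coeff 0 := by rw [leadingCoeff, hd]
    omega
  rw [quot0, if_pos hc.le, hfc, divX_C]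

/-- Positivity invariant is preserved. -/
lemma quot0_inv {f : Polynomial ℤ} (hf : f = 0 ∨ 0 < f.leadingCoeff) :
    quot0 f = 0 ∨ 0 < (quot0 f).leadingCoeff := by
  rcases hf with rfl | hf
  · left; exact quot0_zero
  rcases Nat.eq_zero_or_pos f.natDegree with h0 | h0
  · left; exact quot0_of_pos_const h0 hf
  · -- deg f ≥ 1
    have hdg : f.divX.natDegree = f.natDegree - 1 := natDegree_divX_eq_natDegree_tsub_one
    have hlc : f.divX.coeff (f.natDegree - 1) = f.leadingCoeff := by
      rw [coeff_divX]
      have h2 : f.natDegree - 1 + 1 = f.natDegree := by omega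
      rw [h2]; rfl
    rcases Nat.eq_zero_or_pos (f.natDegree - 1) with h1 | h1
    · -- divX f is a positive constant
      have hdc : f.divX = C f.leadingCoeff := by
        rw [eq_C_of_natDegree_eq_zero (hdg.trans h1)]
        rw [← h1, hlc]
      have hl1 : 1 ≤ f.leadingCoeff := hf
      unfold quot0
      split_ifs with h
      · right; rw [hdc, leadingCoeff_C]; exact hf
      · rcases eq_or_lt_of_le hl1 with he | hl
        · left; rw [hdc, ← he]; simp
        · right
          rw [hdc, ← C_1, ← C_sub, leadingCoeff_C]
          omega
    · -- divX f has degree ≥ 1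
      have key : ∀ e : ℤ, 0 < (f.divX - C e).leadingCoeff := by
        intro e
        have hnd : (f.divX - C e).natDegree = f.divX.natDegree := natDegree_sub_C
        have hco : (f.divX - C e).leadingCoeff = f.leadingCoeff := by
          rw [leadingCoeff, hnd, coeff_sub, coeff_C,
            if_neg (by omega : ¬ f.divX.natDegree = 0), sub_zero, hdg, hlc]
        rw [hco]; exact hf
      right
      unfold quot0
      split_ifs with h
      · simpa using key 0
      · simpa using key 1

lemma Q_terminates : ∀ (n : ℕ) (f : Polynomial ℤ),
    (f = 0 ∨ 0 < f.leadingCoeff) → f.natDegree ≤ n → Q f (n+1) = 0 := by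
  intro n
  induction n with
  | zero =>
    intro f hf hd
    show quot0 f = 0
    rcases hf with rfl | hf
    · exact quot0_zero
    · exact quot0_of_pos_const (Nat.le_zero.mp hd) hf
  | succ n ih =>
    intro f hf hd
    rw [Q_succ_comm]
    exact ih (quot0 f) (quot0_inv hf) (by have := natDegree_quot0_le f; omega)

lemma rep_sum : ∀ (n : ℕ) (f : Polynomial ℤ),
    f = (∑ i ∈ Finset.range (n+1), dig (Q f i) * X ^ i) + X ^ (n+1) * Q f (n+1) := by
  intro n
  induction n with
  | zero =>
    intro f
    rw [Finset.sum_range_one, pow_zero, mul_one, pow_one]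
    show f = dig (Q f 0) + X * quot0 (Q f 0)
    exact (dig_add_X_mul_quot0 f).symm
  | succ n ih =>
    intro f
    have h1 : quot0 f =
        (∑ i ∈ Finset.range (n+1), dig (Q (quot0 f) i) * X ^ i)
          + X ^ (n+1) * Q (quot0 f) (n+1) := ih (quot0 f)
    have h2 : f = dig f + X * quot0 f := (dig_add_X_mul_quot0 f).symm
    have e1 : ∑ i ∈ Finset.range (n+1), dig (Q f (i+1)) * X ^ (i+1)
        = X * ∑ i ∈ Finset.range (n+1), dig (Q (quot0 f) i) * X ^ i := by
      rw [Finset.mul_sum]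
      exact Finset.sum_congr rfl (fun i _ => by rw [Q_succ_comm]; ring)
    have h4 : Q f (n+1+1) = Q (quot0 f) (n+1) := Q_succ_comm f (n+1)
    have h5 : Q f 0 = f := rfl
    rw [Finset.sum_range_succ' (fun i => dig (Q f i) * X ^ i), e1, h4, h5]
    calc f = dig f + X * quot0 f := h2
      _ = dig f + X * ((∑ i ∈ Finset.range (n+1), dig (Q (quot0 f) i) * X ^ i)
            + X ^ (n+1) * Q (quot0 f) (n+1)) := by rw [← h1]
      _ = X * (∑ i ∈ Finset.range (n+1), dig (Q (quot0 f) i) * X ^ i) + dig f * X ^ 0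
            + X ^ (n+1+1) * Q (quot0 f) (n+1) := by ring

/-- Any digit equals the greedy digit determined by its constant coefficient. -/
lemma isDigit_eq_dig {a : ℕ} {q : Polynomial ℤ} (h : IsDigit a q) : q = dig q := by
  rcases h with ⟨j, _, rfl⟩ | ⟨j, hj1, _, rfl⟩
  · rw [dig, coeff_C]
    simp [Int.natCast_nonneg]
  · have hc : (X - C (j:ℤ)).coeff 0 = -(j:ℤ) := by
      simp [coeff_X_zero]
    rw [dig, hc, if_neg (by omega : ¬ (0:ℤ) ≤ -(j:ℤ)), map_neg]
    ring

lemma dig_congr {p q : Polynomial ℤ} (h : p.coeff 0 = q.coeff 0) : dig p = dig q := by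
  unfold dig; rw [h]

lemma peel {a : ℕ} {m : ℕ} {d : ℕ → Polynomial ℤ} {f : Polynomial ℤ}
    (hd : ∀ i, IsDigit a (d i))
    (hsum : f = ∑ i ∈ Finset.range (m + 1), d i * X ^ i) :
    d 0 = dig f ∧ quot0 f = ∑ i ∈ Finset.range m, d (i+1) * X ^ i := by
  have hsum' : f = (∑ i ∈ Finset.range m, d (i+1) * X ^ (i+1)) + d 0 := by
    rw [hsum, Finset.sum_range_succ' (fun i => d i * X ^ i)]; simp
  have hc0 : f.coeff 0 = (d 0).coeff 0 := by
    rw [hsum', coeff_add, finset_sum_coeff]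
    have h6 : ∀ i ∈ Finset.range m, (d (i+1) * X ^ (i+1)).coeff 0 = 0 := by
      intro i _
      rw [coeff_mul_X_pow']
      simp
    rw [Finset.sum_congr rfl h6]
    simp
  have hd0 : d 0 = dig f :=
    (isDigit_eq_dig (hd 0)).trans (dig_congr hc0.symm)
  refine ⟨hd0, ?_⟩
  have h1 : dig f + X * quot0 f = f := dig_add_X_mul_quot0 f
  rw [← hd0] at h1
  have key : X * quot0 f = X * ∑ i ∈ Finset.range m, d (i+1) * X ^ i := by
    rw [Finset.mul_sum]
    have h7 : ∀ i ∈ Finset.range m, X * (d (i+1) * X ^ i) = d (i+1) * X ^ (i+1) :=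
      fun i _ => by ring
    rw [Finset.sum_congr rfl h7]
    linear_combination h1 + hsum'
  exact mul_left_cancel₀ X_ne_zero key

/-- The digits of any representation are forced to be the greedy digits. -/
lemma forced {a : ℕ} : ∀ (m : ℕ) (d : ℕ → Polynomial ℤ) (f : Polynomial ℤ),
    (∀ i, IsDigit a (d i)) →
    f = ∑ i ∈ Finset.range (m + 1), d i * X ^ i →
    (∀ i ≤ m, d i = dig (Q f i)) ∧ Q f (m+1) = 0 := by
  intro m
  induction m with
  | zero =>
    intro d f hd hsum
    obtain ⟨hd0, hq⟩ := peel hd hsum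
    refine ⟨fun i hi => ?_, ?_⟩
    · interval_cases i; exact hd0
    · show quot0 f = 0
      simpa using hq
  | succ m ih =>
    intro d f hd hsum
    obtain ⟨hd0, hq⟩ := peel hd hsum
    obtain ⟨ih1, ih2⟩ := ih (fun i => d (i+1)) (quot0 f) (fun i => hd (i+1)) hq
    refine ⟨fun i hi => ?_, ?_⟩
    · cases i with
      | zero => exact hd0
      | succ j => rw [Q_succ_comm]; exact ih1 j (by omega)
    · rw [Q_succ_comm]; exact ih2

lemma isDigit_dig_of_need_le {a : ℕ} (g : Polynomial ℤ) (h : need g ≤ a) :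
    IsDigit a (dig g) := by
  unfold dig need at *
  split_ifs at h ⊢ with hc
  · exact Or.inl ⟨(g.coeff 0).toNat, by omega, by rw [Int.toNat_of_nonneg hc]⟩
  · refine Or.inr ⟨(-g.coeff 0).toNat, by omega, h, ?_⟩
    rw [Int.toNat_of_nonneg (by omega), map_neg, sub_neg_eq_add]

lemma need_le_of_isDigit {a : ℕ} {g : Polynomial ℤ} (h : IsDigit a (dig g)) :
    need g ≤ a := by
  unfold dig need at *
  split_ifs at h ⊢ with hc
  · rcases h with ⟨j, hj, he⟩ | ⟨j, hj1, hj2, he⟩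
    · have hv : g.coeff 0 = (j : ℤ) := by
        have := congrArg (fun p => Polynomial.coeff p 0) he
        simpa using this
      omega
    · exfalso
      have hdeg := congrArg natDegree he
      rw [natDegree_C, natDegree_X_sub_C] at hdeg
      simp at hdeg
  · rcases h with ⟨j, hj, he⟩ | ⟨j, hj1, hj2, he⟩
    · exfalso
      have he' : X - C (-(g.coeff 0)) = C (j : ℤ) := by rw [map_neg, sub_neg_eq_add]; exact he
      have hdeg := congrArg natDegree he'
      rw [natDegree_C, natDegree_X_sub_C] at hdeg
      simp at hdeg
    · have hv : g.coeff 0 = -(j : ℤ) := by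
        have := congrArg (fun p => Polynomial.coeff p 0) he
        simpa [coeff_X_zero] using this
      omega

theorem baseX_representation_exists_unique (f : Polynomial ℤ) (hf : 0 < f.leadingCoeff) :
    ∃ a : ℕ, 0 < a ∧ (∃ m d, IsBaseXRep a f m d) ∧
      (∀ a' : ℕ, 0 < a' → (∃ m d, IsBaseXRep a' f m d) → a ≤ a') ∧
      (∀ m₁ m₂ : ℕ, ∀ d₁ d₂ : ℕ → Polynomial ℤ,
        IsBaseXRep a f m₁ d₁ → IsBaseXRep a f m₂ d₂ → m₁ = m₂ ∧ d₁ = d₂) := by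
  have hf0 : f ≠ 0 := fun h => by simp [h] at hf
  have hinv : f = 0 ∨ 0 < f.leadingCoeff := Or.inr hf
  have hex : ∃ k, Q f k = 0 := ⟨f.natDegree + 1, Q_terminates _ f hinv le_rfl⟩
  have hk0 : Q f (Nat.find hex) = 0 := Nat.find_spec hex
  have hkpos : 0 < Nat.find hex :=
    Nat.pos_of_ne_zero (fun h => hf0 (by rw [h] at hk0; exact hk0))
  set k := Nat.find hex with hk
  set m := k - 1 with hmdef
  have hm1 : m + 1 = k := by omega
  have hQm : Q f m ≠ 0 := Nat.find_min hex (by omega)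
  have hQm1 : Q f (m+1) = 0 := by rw [hm1]; exact hk0
  set d : ℕ → Polynomial ℤ := fun i => dig (Q f i) with hddef
  set a : ℕ := (Finset.range (m+1)).sup (fun i => need (Q f i)) with hadef
  have hapos : 0 < a :=
    lt_of_lt_of_le (need_pos (Q f 0)) (Finset.le_sup (f := fun i => need (Q f i)) (Finset.mem_range.mpr (Nat.succ_pos m)))
  have hrep : IsBaseXRep a f m d := by
    refine ⟨?_, ?_, ?_, ?_⟩
    · intro i
      rcases le_or_gt i m with hi | hi
      · exact isDigit_dig_of_need_le _
          (Finset.le_sup (f := fun i => need (Q f i))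
            (Finset.mem_range.mpr (by omega : i < m + 1)))
      · have hz : Q f i = 0 := Q_zero_mono hQm1 i (by omega)
        show IsDigit a (dig (Q f i))
        rw [hz, dig_zero]
        exact Or.inl ⟨0, hapos, by simp⟩
    · have h1 := dig_add_X_mul_quot0 (Q f m)
      have h2 : quot0 (Q f m) = Q f (m+1) := rfl
      rw [h2, hQm1, mul_zero, add_zero] at h1
      show dig (Q f m) ≠ 0
      rw [h1]; exact hQm
    · intro i hi
      have hz : Q f i = 0 := Q_zero_mono hQm1 i (by omega)
      show dig (Q f i) = 0
      rw [hz, dig_zero]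
    · have h1 := rep_sum m f
      rw [hQm1, mul_zero, add_zero] at h1
      exact h1
  have hforced : ∀ a' m' d', IsBaseXRep a' f m' d' → m' = m ∧ ∀ i, d' i = d i := by
    rintro a' m' d' ⟨h1, h2, h3, h4⟩
    obtain ⟨hall, hz⟩ := forced m' d' f h1 h4
    have hm'ne : Q f m' ≠ 0 := by
      intro h
      exact h2 (by rw [hall m' le_rfl, h, dig_zero])
    have hmm : m' = m := by
      by_contra hne
      rcases Nat.lt_or_ge m' m with hlt | hge
      · exact hQm (Q_zero_mono hz m (by omega))
      · exact hm'ne (Q_zero_mono hQm1 m' (by omega))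
    refine ⟨hmm, fun i => ?_⟩
    rcases le_or_gt i m with hi | hi
    · exact hall i (by omega)
    · rw [h3 i (by omega)]
      have hQi : Q f i = 0 := Q_zero_mono hQm1 i (by omega)
      show (0 : Polynomial ℤ) = dig (Q f i)
      rw [hQi, dig_zero]
  refine ⟨a, hapos, ⟨m, d, hrep⟩, ?_, ?_⟩
  · rintro a' ha' ⟨m', d', hrep'⟩
    obtain ⟨hm', hdeq⟩ := hforced a' m' d' hrep'
    rw [hadef]
    apply Finset.sup_le
    intro i hi
    apply need_le_of_isDigit
    have hdi := hrep'.1 i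
    rw [hdeq i] at hdi
    exact hdi
  · intro m₁ m₂ d₁ d₂ hr1 hr2
    obtain ⟨e1, f1⟩ := hforced a m₁ d₁ hr1
    obtain ⟨e2, f2⟩ := hforced a m₂ d₂ hr2
    exact ⟨e1.trans e2.symm, funext fun i => (f1 i).trans (f2 i).symm⟩
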